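/- Let G be a finite group. The rational Burnside ring B(G) ⊗ ℚ admits a complete set of orthogonal idempotents {u_Γ} indexed by the conjugacy classes of subgroups Γ of G; that is, u_Γ · u_Γ' = 0 for Γ not conjugate to Γ', u_Γ² = u_Γ, and Σ_Γ u_Γ = 1. -/

import Mathlib

open Pointwise Finsupp

noncomputable section

/-- Conjugacy classes of subgroups of `G`. -/
def SubgroupConj (G : Type*) [Group G] : Type _ :=
  Quotient (MulAction.orbitRel (ConjAct G) (Subgroup G))

variable {G : Type*} [Group G]

/-- The conjugacy class of a subgroup. -/
def Subgroup.toConj (K : Subgroup G) : SubgroupConj G :=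
  Quotient.mk (MulAction.orbitRel (ConjAct G) (Subgroup G)) K

/-- A representative of a conjugacy class of subgroups. -/
def SubgroupConj.rep (c : SubgroupConj G) : Subgroup G := Quotient.out c

instance : DecidableEq (SubgroupConj G) := Classical.decEq _

instance [Finite G] : Finite (Subgroup G) :=
  Finite.of_injective (fun H => (H : Set G)) fun _ _ h => SetLike.ext' h

instance [Finite G] : Finite (SubgroupConj G) := Quotient.finite _

noncomputable instance [Finite G] : Fintype (SubgroupConj G) := Fintype.ofFinite _

instance [Finite G] (s t : Set G) : Finite (DoubleCoset.Quotient s t) :=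
  Quotient.finite _

noncomputable instance [Finite G] (s t : Set G) : Fintype (DoubleCoset.Quotient s t) :=
  Fintype.ofFinite _

/-- The conjugate subgroup `g K g⁻¹`. -/
def conjSub (g : G) (K : Subgroup G) : Subgroup G :=
  Subgroup.map (MulAut.conj g).toMonoidHom K

/-- The rational Burnside ring of `G`, as the free `ℚ`-module on the classes `[G/Γ]`. -/
abbrev BQ (G : Type*) [Group G] := SubgroupConj G →₀ ℚ

variable [Finite G]

/-- The double coset formula for the product of two basis elements
`⟨Γ⟩⟨Γ'⟩ = Σ_{g ∈ Γ'\G\Γ} ⟨Γ ∩ g⁻¹ Γ' g⟩`. -/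
def basisMul (c d : SubgroupConj G) : BQ G :=
  ∑ q : DoubleCoset.Quotient (d.rep : Set G) (c.rep : Set G),
    Finsupp.single (Subgroup.toConj (c.rep ⊓ conjSub (Quotient.out q)⁻¹ d.rep)) 1

/-- The multiplication of the Burnside ring in the basis `[G/Γ]`. -/
def mulB (x y : BQ G) : BQ G :=
  x.sum fun c a => y.sum fun d b => (a * b) • basisMul c d

/-- The unit `[G/G]` of the Burnside ring. -/
def oneB : BQ G := Finsupp.single (Subgroup.toConj (⊤ : Subgroup G)) 1

/-- Induction along an (injective) group homomorphism. -/
def indF {H : Type*} [Group H] (f : H →* G) (y : BQ H) : BQ G :=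
  y.sum fun c a => Finsupp.single (Subgroup.toConj (c.rep.map f)) a

/-- Restriction of the basis element `[G/Γ]` along `f : H →* G`:
`Res [G/Γ] = Σ_{g ∈ f(H)\G/Γ} [H / f⁻¹(g Γ g⁻¹)]`. -/
def resBasis {H : Type*} [Group H] (f : H →* G) (c : SubgroupConj G) : BQ H :=
  ∑ q : DoubleCoset.Quotient (f.range : Set G) (c.rep : Set G),
    Finsupp.single (Subgroup.toConj ((conjSub (Quotient.out q) c.rep).comap f)) 1

/-- Restriction along a group homomorphism. -/
def resF {H : Type*} [Group H] (f : H →* G) (x : BQ G) : BQ H :=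
  x.sum fun c a => a • resBasis f c

/-- The mark of the basis element `[G/Γ]` at (the class of) `Δ`: the number of
`Δ`-fixed points of `G/Γ`. -/
def markBasis (c d : SubgroupConj G) : ℚ :=
  (Nat.card {x : G ⧸ c.rep // ∀ k ∈ d.rep, k • x = x} : ℚ)

/-- The mark homomorphism, in the basis `[G/Γ]`. -/
def markMap (x : BQ G) : SubgroupConj G → ℚ :=
  fun d => x.sum fun c a => a * markBasis c d

/-- `x` is the primitive idempotent of `B(G) ⊗ ℚ` supported at the full subgroup:
its mark at `G` is `1` and its marks at all proper subgroups vanish. -/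
def IsTopIdem (x : BQ G) : Prop :=
  markMap x = fun d => if d = Subgroup.toConj (⊤ : Subgroup G) then 1 else 0

/-- `|N_G(H)/H|`. -/
def nuG (H : Subgroup G) : ℕ :=
  Nat.card (Subgroup.normalizer (H : Set G) ⧸ H.subgroupOf (Subgroup.normalizer (H : Set G)))


/-- The conjugation isomorphism `H → gHg⁻¹`, as a monoid homomorphism. -/
def conjHom (g : G) (H : Subgroup G) : ↥H →* ↥(conjSub g H) :=
  ((MulAut.conj g).toMonoidHom.comp H.subtype).codRestrict (conjSub g H)
    (fun h => Subgroup.mem_map_of_mem _ h.2)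

/-- Conjugation by an element of the normalizer of `H`, as an endomorphism of `H`. -/
def normConjHom (H : Subgroup G) (n : G) (hn : n ∈ Subgroup.normalizer (H : Set G)) : ↥H →* ↥H :=
  ((MulAut.conj n).toMonoidHom.comp H.subtype).codRestrict H
    (fun h => by simpa using (Subgroup.mem_normalizer_iff.mp hn ↑h).mp h.2)


/-! ### Auxiliary machinery -/

section BurnsideAux

variable {G : Type*} [Group G]

/-- The set of `Δ`-fixed points of `G ⧸ K`. -/
abbrev FixPts (Δ K : Subgroup G) : Type _ := {x : G ⧸ K // ∀ k ∈ Δ, k • x = x}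

lemma mem_conjSub {g x : G} {K : Subgroup G} : x ∈ conjSub g K ↔ g⁻¹ * x * g ∈ K := by
  simp only [conjSub, Subgroup.mem_map, MulEquiv.coe_toMonoidHom, MulAut.conj_apply]
  constructor
  · rintro ⟨k, hk, rfl⟩
    have : g⁻¹ * (g * k * g⁻¹) * g = k := by group
    rwa [this]
  · intro h
    exact ⟨g⁻¹ * x * g, h, by group⟩

lemma conjSub_eq_smul (γ : ConjAct G) (K : Subgroup G) :
    γ • K = conjSub (ConjAct.ofConjAct γ) K := by
  ext x
  rw [Subgroup.mem_pointwise_smul_iff_inv_smul_mem, mem_conjSub, ConjAct.smul_def, map_inv]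
  group

/-- The equivariant bijection `G ⧸ K ≃ G ⧸ gKg⁻¹`. -/
def conjQuotEquiv (g : G) (K : Subgroup G) : G ⧸ K ≃ G ⧸ conjSub g K where
  toFun := Quotient.map' (· * g⁻¹) (fun a b h => by
    rw [QuotientGroup.leftRel_apply] at h ⊢
    rw [mem_conjSub]
    have : g⁻¹ * ((a * g⁻¹)⁻¹ * (b * g⁻¹)) * g = a⁻¹ * b := by group
    rwa [this])
  invFun := Quotient.map' (· * g) (fun a b h => by
    rw [QuotientGroup.leftRel_apply] at h ⊢
    rw [mem_conjSub] at h
    have : g⁻¹ * (a⁻¹ * b) * g = (a * g)⁻¹ * (b * g) := by group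
    rwa [this] at h)
  left_inv := fun x => Quotient.inductionOn' x fun a => by
    show Quotient.mk'' _ = Quotient.mk'' _
    congr 1; group
  right_inv := fun x => Quotient.inductionOn' x fun a => by
    show Quotient.mk'' _ = Quotient.mk'' _
    congr 1; group

lemma conjQuotEquiv_mk (g : G) (K : Subgroup G) (a : G) :
    conjQuotEquiv g K (QuotientGroup.mk a) = QuotientGroup.mk (a * g⁻¹) := rfl

lemma conjQuotEquiv_smul (g k : G) (K : Subgroup G) (x : G ⧸ K) :
    conjQuotEquiv g K (k • x) = k • conjQuotEquiv g K x := by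
  induction x using QuotientGroup.induction_on with
  | H a =>
    rw [MulAction.Quotient.smul_mk, conjQuotEquiv_mk, conjQuotEquiv_mk,
      MulAction.Quotient.smul_mk, smul_eq_mul, smul_eq_mul, mul_assoc]

/-- Conjugate subgroups give equivalent fixed-point sets. -/
def fixEquivConj (Δ : Subgroup G) (g : G) (K : Subgroup G) :
    FixPts Δ (conjSub g K) ≃ FixPts Δ K :=
  ((conjQuotEquiv g K).subtypeEquiv fun x => by
    constructor
    · intro h k hk
      rw [← conjQuotEquiv_smul, h k hk]
    · intro h k hk
      apply (conjQuotEquiv g K).injective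
      rw [conjQuotEquiv_smul, h k hk]).symm

lemma card_fix_conj (Δ : Subgroup G) (g : G) (K : Subgroup G) :
    Nat.card (FixPts Δ (conjSub g K)) = Nat.card (FixPts Δ K) :=
  Nat.card_congr (fixEquivConj Δ g K)

lemma rep_toConj (K : Subgroup G) : ∃ g : G, (Subgroup.toConj K).rep = conjSub g K := by
  have h : (MulAction.orbitRel (ConjAct G) (Subgroup G)).r (Subgroup.toConj K).rep K :=
    Quotient.mk_out K
  rw [MulAction.orbitRel_apply, MulAction.mem_orbit_iff] at h
  obtain ⟨γ, hγ⟩ := h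
  exact ⟨ConjAct.ofConjAct γ, by rw [← hγ, conjSub_eq_smul]⟩

variable [Finite G]

lemma markBasis_def (c d : SubgroupConj G) :
    markBasis c d = (Nat.card (FixPts d.rep c.rep) : ℚ) := rfl

lemma markBasis_toConj (K : Subgroup G) (e : SubgroupConj G) :
    markBasis (Subgroup.toConj K) e = (Nat.card (FixPts e.rep K) : ℚ) := by
  obtain ⟨g, hg⟩ := rep_toConj K
  rw [markBasis_def, hg, card_fix_conj]

omit [Finite G] in
lemma doset_out_rel (A B : Subgroup G) (g0 : G) :
    ∃ b ∈ B, ∃ a ∈ A,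
      g0 = b * (Quotient.out (Quotient.mk (DoubleCoset.setoid (B : Set G) (A : Set G)) g0)) * a := by
  have h := Quotient.mk_out (s := DoubleCoset.setoid (B : Set G) (A : Set G)) g0
  exact DoubleCoset.rel_iff.mp h

/-- The intersection subgroup attached to a double coset. -/
abbrev dosetK (A B : Subgroup G) (q : DoubleCoset.Quotient (B : Set G) (A : Set G)) : Subgroup G :=
  A ⊓ conjSub (Quotient.out q)⁻¹ B

/-- Projection `G ⧸ (A ⊓ g⁻¹Bg) → G ⧸ A`. -/
def dosetToA (A B : Subgroup G) (q : DoubleCoset.Quotient (B : Set G) (A : Set G)) :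
    G ⧸ dosetK A B q → G ⧸ A :=
  Quotient.map' id (fun a b h => by
    rw [QuotientGroup.leftRel_apply] at h ⊢
    exact (Subgroup.mem_inf.mp h).1)

/-- Projection `G ⧸ (A ⊓ g⁻¹Bg) → G ⧸ B`, `x ↦ x g⁻¹`. -/
def dosetToB (A B : Subgroup G) (q : DoubleCoset.Quotient (B : Set G) (A : Set G)) :
    G ⧸ dosetK A B q → G ⧸ B :=
  Quotient.map' (· * (Quotient.out q)⁻¹) (fun a b h => by
    rw [QuotientGroup.leftRel_apply] at h ⊢
    have h2 := (Subgroup.mem_inf.mp h).2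
    rw [mem_conjSub] at h2
    have h3 : (Quotient.out q)⁻¹⁻¹ * (a⁻¹ * b) * (Quotient.out q)⁻¹
        = (a * (Quotient.out q)⁻¹)⁻¹ * (b * (Quotient.out q)⁻¹) := by group
    rwa [h3] at h2)

omit [Finite G] in
lemma dosetToA_mk (A B : Subgroup G) (q : DoubleCoset.Quotient (B : Set G) (A : Set G)) (a : G) :
    dosetToA A B q (QuotientGroup.mk a) = QuotientGroup.mk a := rfl

omit [Finite G] in
lemma dosetToB_mk (A B : Subgroup G) (q : DoubleCoset.Quotient (B : Set G) (A : Set G)) (a : G) :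
    dosetToB A B q (QuotientGroup.mk a) = QuotientGroup.mk (a * (Quotient.out q)⁻¹) := rfl

omit [Finite G] in
lemma dosetToA_smul (A B : Subgroup G) (q : DoubleCoset.Quotient (B : Set G) (A : Set G)) (k : G)
    (x : G ⧸ dosetK A B q) : dosetToA A B q (k • x) = k • dosetToA A B q x := by
  induction x using QuotientGroup.induction_on with
  | H a => rfl

omit [Finite G] in
lemma dosetToB_smul (A B : Subgroup G) (q : DoubleCoset.Quotient (B : Set G) (A : Set G)) (k : G)
    (x : G ⧸ dosetK A B q) : dosetToB A B q (k • x) = k • dosetToB A B q x := by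
  induction x using QuotientGroup.induction_on with
  | H a =>
    rw [MulAction.Quotient.smul_mk, dosetToB_mk, dosetToB_mk, MulAction.Quotient.smul_mk,
      smul_eq_mul, smul_eq_mul, mul_assoc]

/-- The key double-coset fixed-point counting identity. -/
lemma doset_card_key (A B Δ : Subgroup G) :
    ∑ q : DoubleCoset.Quotient (B : Set G) (A : Set G),
      Nat.card (FixPts Δ (A ⊓ conjSub (Quotient.out q)⁻¹ B)) =
    Nat.card (FixPts Δ A) * Nat.card (FixPts Δ B) := by
  classical
  set F : (Σ q : DoubleCoset.Quotient (B : Set G) (A : Set G), FixPts Δ (dosetK A B q)) →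
      FixPts Δ A × FixPts Δ B :=
    fun p => (⟨dosetToA A B p.1 p.2.1, fun k hk => by
                rw [← dosetToA_smul, p.2.2 k hk]⟩,
              ⟨dosetToB A B p.1 p.2.1, fun k hk => by
                rw [← dosetToB_smul, p.2.2 k hk]⟩) with hF
  have hinj : Function.Injective F := by
    rintro ⟨q, x, hx⟩ ⟨q', x', hx'⟩ hEq
    induction x using QuotientGroup.induction_on with
    | H a =>
    induction x' using QuotientGroup.induction_on with
    | H a' =>
    have h1 : dosetToA A B q (QuotientGroup.mk a) = dosetToA A B q' (QuotientGroup.mk a') :=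
      congrArg (fun z => (z.1 : G ⧸ A)) hEq
    have h2 : dosetToB A B q (QuotientGroup.mk a) = dosetToB A B q' (QuotientGroup.mk a') :=
      congrArg (fun z => (z.2 : G ⧸ B)) hEq
    rw [dosetToA_mk, dosetToA_mk, QuotientGroup.eq] at h1
    rw [dosetToB_mk, dosetToB_mk, QuotientGroup.eq] at h2
    have hq : q = q' := by
      rw [← Quotient.out_eq q, ← Quotient.out_eq q']
      apply Quotient.sound
      apply DoubleCoset.rel_iff.mpr
      refine ⟨((a * (Quotient.out q)⁻¹)⁻¹ * (a' * (Quotient.out q')⁻¹))⁻¹, B.inv_mem h2,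
        a⁻¹ * a', h1, ?_⟩
      group
    subst hq
    have hmem : a⁻¹ * a' ∈ dosetK A B q := by
      refine Subgroup.mem_inf.mpr ⟨h1, mem_conjSub.mpr ?_⟩
      have h3 : (Quotient.out q)⁻¹⁻¹ * (a⁻¹ * a') * (Quotient.out q)⁻¹
          = (a * (Quotient.out q)⁻¹)⁻¹ * (a' * (Quotient.out q)⁻¹) := by group
      rw [h3]
      exact h2
    exact Sigma.ext rfl (heq_of_eq (Subtype.ext (QuotientGroup.eq.mpr hmem)))
  have hsurj : Function.Surjective F := by
    rintro ⟨⟨u, hu⟩, ⟨v, hv⟩⟩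
    induction u using QuotientGroup.induction_on with
    | H ub =>
    induction v using QuotientGroup.induction_on with
    | H vb =>
    set q : DoubleCoset.Quotient (B : Set G) (A : Set G) :=
      Quotient.mk (DoubleCoset.setoid (B : Set G) (A : Set G)) (vb⁻¹ * ub) with hqdef
    set g : G := Quotient.out q with hgdef
    obtain ⟨b, hb, α, hα, heq⟩ := doset_out_rel A B (vb⁻¹ * ub)
    -- heq : vb⁻¹ * ub = b * g * α
    set x : G := ub * α⁻¹ with hxdef
    have hxg : x * g⁻¹ = vb * b := by
      have hg : g = b⁻¹ * (vb⁻¹ * ub) * α⁻¹ := by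
        have h0 : b * g * α = vb⁻¹ * ub := by
          rw [hgdef, hqdef]; exact heq.symm
        rw [← h0]; group
      rw [hxdef, hg]; group
    have hA : ∀ k ∈ Δ, ub⁻¹ * k * ub ∈ A := by
      intro k hk
      have h := hu k⁻¹ (Δ.inv_mem hk)
      rw [MulAction.Quotient.smul_mk, QuotientGroup.eq, smul_eq_mul] at h
      have h3 : (k⁻¹ * ub)⁻¹ * ub = ub⁻¹ * k * ub := by group
      rwa [h3] at h
    have hB : ∀ k ∈ Δ, vb⁻¹ * k * vb ∈ B := by
      intro k hk
      have h := hv k⁻¹ (Δ.inv_mem hk)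
      rw [MulAction.Quotient.smul_mk, QuotientGroup.eq, smul_eq_mul] at h
      have h3 : (k⁻¹ * vb)⁻¹ * vb = vb⁻¹ * k * vb := by group
      rwa [h3] at h
    have hmem : ∀ k ∈ Δ, x⁻¹ * k * x ∈ dosetK A B q := by
      intro k hk
      refine Subgroup.mem_inf.mpr ⟨?_, mem_conjSub.mpr ?_⟩
      · have h3 : x⁻¹ * k * x = α * (ub⁻¹ * k * ub) * α⁻¹ := by
          rw [hxdef]; group
        rw [h3]
        exact A.mul_mem (A.mul_mem hα (hA k hk)) (A.inv_mem hα)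
      · have h4 : g⁻¹⁻¹ * (x⁻¹ * k * x) * g⁻¹ = (x * g⁻¹)⁻¹ * k * (x * g⁻¹) := by group
        rw [h4, hxg]
        have h5 : (vb * b)⁻¹ * k * (vb * b) = b⁻¹ * (vb⁻¹ * k * vb) * b := by group
        rw [h5]
        exact B.mul_mem (B.mul_mem (B.inv_mem hb) (hB k hk)) hb
    have hfix : ∀ k ∈ Δ, k • (QuotientGroup.mk x : G ⧸ dosetK A B q) = QuotientGroup.mk x := by
      intro k hk
      rw [MulAction.Quotient.smul_mk, QuotientGroup.eq, smul_eq_mul]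
      have h3 : (k * x)⁻¹ * x = x⁻¹ * k⁻¹ * x := by group
      rw [h3]
      exact hmem k⁻¹ (Δ.inv_mem hk)
    refine ⟨⟨q, ⟨QuotientGroup.mk x, hfix⟩⟩, ?_⟩
    refine Prod.ext (Subtype.ext ?_) (Subtype.ext ?_)
    · show dosetToA A B q (QuotientGroup.mk x) = QuotientGroup.mk ub
      rw [dosetToA_mk, QuotientGroup.eq]
      have h3 : x⁻¹ * ub = α := by rw [hxdef]; group
      rw [h3]; exact hα
    · show dosetToB A B q (QuotientGroup.mk x) = QuotientGroup.mk vb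
      rw [dosetToB_mk, QuotientGroup.eq, ← hgdef, hxg]
      have h3 : (vb * b)⁻¹ * vb = b⁻¹ := by group
      rw [h3]; exact B.inv_mem hb
  haveI : ∀ q : DoubleCoset.Quotient (B : Set G) (A : Set G), Fintype (FixPts Δ (dosetK A B q)) :=
    fun q => Fintype.ofFinite _
  calc ∑ q : DoubleCoset.Quotient (B : Set G) (A : Set G), Nat.card (FixPts Δ (dosetK A B q))
      = Nat.card (Σ q : DoubleCoset.Quotient (B : Set G) (A : Set G), FixPts Δ (dosetK A B q)) := by
        rw [Nat.card_eq_fintype_card, Fintype.card_sigma]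
        exact Finset.sum_congr rfl fun q _ => Nat.card_eq_fintype_card
    _ = Nat.card (FixPts Δ A × FixPts Δ B) :=
        Nat.card_congr (Equiv.ofBijective F ⟨hinj, hsurj⟩)
    _ = Nat.card (FixPts Δ A) * Nat.card (FixPts Δ B) := Nat.card_prod _ _

/-- The mark homomorphism as a linear map. -/
def MarkHom : BQ G →ₗ[ℚ] (SubgroupConj G → ℚ) :=
  Finsupp.linearCombination ℚ (fun c d => markBasis c d)

lemma MarkHom_apply (x : BQ G) (d : SubgroupConj G) : MarkHom x d = markMap x d := by
  rw [MarkHom, Finsupp.linearCombination_apply, markMap]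
  simp only [Finsupp.sum]
  rw [Finset.sum_apply]
  rfl

lemma MarkHom_single (c : SubgroupConj G) (a : ℚ) (d : SubgroupConj G) :
    MarkHom (Finsupp.single c a) d = a * markBasis c d := by
  rw [MarkHom, Finsupp.linearCombination_single]
  rfl

lemma MarkHom_basisMul (c d : SubgroupConj G) :
    MarkHom (basisMul c d) = fun e => markBasis c e * markBasis d e := by
  funext e
  rw [basisMul, map_sum, Finset.sum_apply]
  have h1 : ∀ q : DoubleCoset.Quotient (d.rep : Set G) (c.rep : Set G),
      MarkHom (Finsupp.single
        (Subgroup.toConj (c.rep ⊓ conjSub (Quotient.out q)⁻¹ d.rep)) (1 : ℚ)) e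
      = ((Nat.card (FixPts e.rep (c.rep ⊓ conjSub (Quotient.out q)⁻¹ d.rep)) : ℚ)) := by
    intro q
    rw [MarkHom_single, markBasis_toConj, one_mul]
  simp_rw [h1]
  rw [markBasis_def, markBasis_def, ← Nat.cast_sum, doset_card_key c.rep d.rep e.rep,
    Nat.cast_mul]

lemma MarkHom_basisMul_apply (c d e : SubgroupConj G) :
    MarkHom (basisMul c d) e = markBasis c e * markBasis d e :=
  congrFun (MarkHom_basisMul c d) e

lemma MarkHom_mulB (x y : BQ G) :
    MarkHom (mulB x y) = fun e => MarkHom x e * MarkHom y e := by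
  funext e
  rw [mulB, map_finsuppSum, MarkHom_apply x, MarkHom_apply y, markMap, markMap]
  simp only [Finsupp.sum]
  rw [Finset.sum_apply, Finset.sum_mul]
  refine Finset.sum_congr rfl fun c hc => ?_
  rw [map_sum, Finset.sum_apply, Finset.mul_sum]
  refine Finset.sum_congr rfl fun d hd => ?_
  rw [map_smul, Pi.smul_apply, MarkHom_basisMul_apply, smul_eq_mul]
  ring

lemma markBasis_self_ne (c : SubgroupConj G) : markBasis c c ≠ 0 := by
  rw [markBasis_def]
  have : Nonempty (FixPts c.rep c.rep) := by
    refine ⟨⟨QuotientGroup.mk 1, fun k hk => ?_⟩⟩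
    rw [MulAction.Quotient.smul_mk, QuotientGroup.eq]
    simpa using c.rep.inv_mem hk
  exact_mod_cast Nat.card_pos.ne'

lemma subconj_of_markBasis_ne (a c : SubgroupConj G) (h : markBasis a c ≠ 0) :
    ∃ x : G, c.rep ≤ conjSub x a.rep := by
  rw [markBasis_def] at h
  have : Nonempty (FixPts c.rep a.rep) := by
    rcases Nat.card_pos_iff.mp (Nat.pos_of_ne_zero (by exact_mod_cast h)) with ⟨h1, _⟩
    exact h1
  obtain ⟨⟨z, hz⟩⟩ := this
  obtain ⟨x, rfl⟩ := QuotientGroup.mk_surjective z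
  refine ⟨x, fun k hk => ?_⟩
  have := hz k⁻¹ (c.rep.inv_mem hk)
  rw [MulAction.Quotient.smul_mk, QuotientGroup.eq, smul_eq_mul] at this
  rw [mem_conjSub]
  have h2 : (k⁻¹ * x)⁻¹ * x = x⁻¹ * k * x := by group
  rwa [h2] at this

lemma card_conjSub (x : G) (K : Subgroup G) : Nat.card (conjSub x K) = Nat.card K :=
  (Nat.card_congr (K.equivMapOfInjective _ (MulAut.conj x).injective).toEquiv).symm

lemma class_eq_of (a c : SubgroupConj G) (x : G) (hle : c.rep ≤ conjSub x a.rep)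
    (hcard : Nat.card a.rep ≤ Nat.card c.rep) : a = c := by
  have hcard' : Nat.card (conjSub x a.rep) ≤ Nat.card c.rep := by
    rwa [card_conjSub]
  have heq : c.rep = conjSub x a.rep := by
    apply SetLike.ext'
    apply Set.eq_of_subset_of_ncard_le (SetLike.coe_subset_coe.mpr hle)
    rw [← Nat.card_coe_set_eq, ← Nat.card_coe_set_eq]
    exact hcard'
  have h1 : Subgroup.toConj c.rep = Subgroup.toConj a.rep := by
    rw [heq]
    apply Quotient.sound
    change conjSub x a.rep ∈ MulAction.orbit (ConjAct G) a.rep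
    rw [MulAction.mem_orbit_iff]
    exact ⟨ConjAct.toConjAct x, by rw [conjSub_eq_smul, ConjAct.ofConjAct_toConjAct]⟩
  have h2 : ∀ t : SubgroupConj G, Subgroup.toConj t.rep = t := fun t => Quotient.out_eq t
  rw [← h2 a, ← h2 c, h1]

lemma MarkHom_injective : Function.Injective (MarkHom (G := G)) := by
  rw [injective_iff_map_eq_zero]
  intro x hx
  by_contra hne
  obtain ⟨c, hc, hmax⟩ := Finset.exists_max_image x.support (fun a => Nat.card a.rep)
    (Finsupp.support_nonempty_iff.mpr hne)
  have h0 : MarkHom x c = 0 := by rw [hx]; rfl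
  rw [MarkHom_apply, markMap, Finsupp.sum, Finset.sum_eq_single c] at h0
  · exact absurd h0 (mul_ne_zero (Finsupp.mem_support_iff.mp hc) (markBasis_self_ne c))
  · intro a ha hac
    rcases eq_or_ne (markBasis a c) 0 with h | h
    · rw [h, mul_zero]
    · obtain ⟨g, hle⟩ := subconj_of_markBasis_ne a c h
      exact absurd (class_eq_of a c g hle (hmax a ha)) hac
  · intro hcs
    exact absurd hc hcs

lemma MarkHom_oneB : MarkHom (oneB (G := G)) = fun _ => 1 := by
  funext d
  rw [oneB, MarkHom_single, markBasis_toConj, one_mul]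
  haveI : Subsingleton (G ⧸ (⊤ : Subgroup G)) := QuotientGroup.subsingleton_quotient_top
  haveI : Inhabited (FixPts d.rep (⊤ : Subgroup G)) :=
    ⟨⟨QuotientGroup.mk 1, fun k _ => Subsingleton.elim _ _⟩⟩
  haveI : Unique (FixPts d.rep (⊤ : Subgroup G)) := Unique.mk' _
  rw [Nat.card_unique]
  norm_num

end BurnsideAux

/-- The rational Burnside ring of a finite group admits a complete set of orthogonal
idempotents indexed by the conjugacy classes of subgroups. -/
theorem burnside_complete_orthogonal_idempotents (G : Type*) [Group G] [Finite G] :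
    ∃ u : SubgroupConj G → BQ G,
      (∀ c d : SubgroupConj G, c ≠ d → mulB (u c) (u d) = 0) ∧
      (∀ c : SubgroupConj G, mulB (u c) (u c) = u c) ∧
      ∑ c : SubgroupConj G, u c = (oneB : BQ G) := by
  classical
  have hinj := MarkHom_injective (G := G)
  have hsurj : Function.Surjective (MarkHom (G := G)) := by
    set e := Finsupp.linearEquivFunOnFinite ℚ ℚ (SubgroupConj G)
    have h1 : Function.Injective
        ((MarkHom (G := G)) ∘ₗ (e.symm : (SubgroupConj G → ℚ) →ₗ[ℚ] BQ G)) :=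
      hinj.comp e.symm.injective
    have h2 := LinearMap.injective_iff_surjective.mp h1
    intro y
    obtain ⟨z, hz⟩ := h2 y
    exact ⟨e.symm z, hz⟩
  choose u hu using fun c : SubgroupConj G => hsurj (Pi.single c (1 : ℚ))
  refine ⟨u, ?_, ?_, ?_⟩
  · intro c d hcd
    apply hinj
    rw [MarkHom_mulB, map_zero, hu, hu]
    funext t
    by_cases htc : t = c
    · subst htc
      simp [Pi.single_apply, Ne.symm hcd]
    · simp [Pi.single_apply, htc]
  · intro c
    apply hinj
    rw [MarkHom_mulB, hu]
    funext t
    by_cases htc : t = c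
    · subst htc
      simp
    · simp [Pi.single_apply, htc]
  · apply hinj
    rw [map_sum, MarkHom_oneB]
    funext t
    rw [Finset.sum_apply]
    simp_rw [hu]
    simp [Pi.single_apply]

end
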